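/- Let r = σ ⊕ χ₁ ⊕ χ₂, where σ is an irreducible 2-dimensional representation of G over k and χ₁, χ₂ are characters of G. Let ν be a character of G such that ν occurs in ⋀²r and (det σ)·χ₁·χ₂ = ν². Then χ₁·χ₂ = det σ = ν. -/

import Mathlib

/-!
Statement 1: Let `r = σ ⊕ χ₁ ⊕ χ₂`, where `σ` is an irreducible 2-dimensional representation
of `G` over `k` and `χ₁, χ₂` are characters of `G`.  Let `ν` be a character of `G` such that
`ν` occurs in `⋀²r` and `(det σ)·χ₁·χ₂ = ν²`.  Then `χ₁·χ₂ = det σ = ν`.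
-/

open Module

section Aux
variable {k W N : Type*} [Field k] [AddCommGroup W] [Module k W] [AddCommGroup N] [Module k N]

noncomputable def lift2' (f : W [⋀^Fin 2]→ₗ[k] N) : ExteriorAlgebra k W →ₗ[k] N :=
  ExteriorAlgebra.liftAlternating (fun i => match i with | 2 => f | _ => 0)

lemma lift2'_ιMulti (f : W [⋀^Fin 2]→ₗ[k] N) (v : Fin 2 → W) :
    lift2' f (ExteriorAlgebra.ιMulti k 2 v) = f v := by
  rw [lift2', ExteriorAlgebra.liftAlternating_apply_ιMulti]
  rfl

lemma ι_mul_eq_ιMulti' (u w : W) :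
    ExteriorAlgebra.ι k u * ExteriorAlgebra.ι k w = ExteriorAlgebra.ιMulti k 2 ![u, w] := by
  simp [ExteriorAlgebra.ιMulti_apply, List.ofFn, Matrix.vecTail]

lemma lift2'_mul (f : W [⋀^Fin 2]→ₗ[k] N) (u w : W) :
    lift2' f (ExteriorAlgebra.ι k u * ExteriorAlgebra.ι k w) = f ![u, w] := by
  rw [ι_mul_eq_ιMulti', lift2'_ιMulti]

lemma lift2'_comm (F : ExteriorAlgebra k W →ₗ[k] N) (A : N →ₗ[k] N) (φ : W →ₗ[k] W)
    (h : ∀ m : Fin 2 → W,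
      F (ExteriorAlgebra.ιMulti k 2 (φ ∘ m)) = A (F (ExteriorAlgebra.ιMulti k 2 m)))
    {x : ExteriorAlgebra k W} (hx : x ∈ ⋀[k]^2 W) :
    F (ExteriorAlgebra.map φ x) = A (F x) := by
  rw [← ExteriorAlgebra.ιMulti_span_fixedDegree] at hx
  induction hx using Submodule.span_induction with
  | mem y hy => obtain ⟨m, rfl⟩ := hy; rw [ExteriorAlgebra.map_apply_ιMulti]; exact h m
  | zero => simp
  | add y z _ _ h1 h2 => simp_all [map_add]
  | smul c y _ h1 => simp_all [map_smul]

lemma exists_coeffs {ι : Type*} [Fintype ι] (B : Basis ι k W) {x : ExteriorAlgebra k W}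
    (hx : x ∈ ⋀[k]^2 W) :
    ∃ c : ι → ι → k,
      x = ∑ i, ∑ j, c i j • (ExteriorAlgebra.ι k (B i) * ExteriorAlgebra.ι k (B j)) := by
  rw [← ExteriorAlgebra.ιMulti_span_fixedDegree] at hx
  induction hx using Submodule.span_induction with
  | mem y hy =>
      obtain ⟨m, rfl⟩ := hy
      refine ⟨fun i j => B.repr (m 0) i * B.repr (m 1) j, ?_⟩
      rw [show (ExteriorAlgebra.ιMulti k 2) m
          = ExteriorAlgebra.ι k (m 0) * ExteriorAlgebra.ι k (m 1) by
        simp [ExteriorAlgebra.ιMulti_apply, List.ofFn, Matrix.vecTail]]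
      conv_lhs => rw [← B.sum_repr (m 0), ← B.sum_repr (m 1)]
      rw [map_sum, map_sum, Finset.sum_mul_sum]
      simp only [Finset.mul_sum, smul_mul_assoc, mul_smul_comm, smul_smul, map_smul]
      exact Finset.sum_congr rfl fun i _ => Finset.sum_congr rfl fun j _ => by rw [mul_comm]
  | zero => exact ⟨0, by simp⟩
  | add y z _ _ h1 h2 =>
      obtain ⟨c1, rfl⟩ := h1; obtain ⟨c2, rfl⟩ := h2
      exact ⟨c1 + c2, by simp [add_smul, Finset.sum_add_distrib]⟩
  | smul r y _ h1 =>
      obtain ⟨c1, rfl⟩ := h1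
      exact ⟨fun i j => r * c1 i j, by simp [Finset.smul_sum, mul_smul]⟩

end Aux


section ExtSq
variable {k : Type} [Field k]
variable {V W : Type} [AddCommGroup V] [Module k V] [AddCommGroup W] [Module k W]

lemma map_mem_exteriorPower (f : V →ₗ[k] W) (n : ℕ) {x : ExteriorAlgebra k V}
    (hx : x ∈ ⋀[k]^n V) : ExteriorAlgebra.map f x ∈ ⋀[k]^n W := by
  rw [← ExteriorAlgebra.ιMulti_span_fixedDegree] at hx ⊢
  induction hx using Submodule.span_induction with
  | mem y hy =>
      obtain ⟨m, rfl⟩ := hy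
      rw [ExteriorAlgebra.map_apply_ιMulti]
      exact Submodule.subset_span ⟨f ∘ m, rfl⟩
  | zero => simp
  | add y z _ _ h1 h2 => rw [map_add]; exact Submodule.add_mem _ h1 h2
  | smul c y _ h => rw [map_smul]; exact Submodule.smul_mem _ c h

/-- The exterior square of a linear map, as a map between second exterior powers. -/
noncomputable def extSq (f : V →ₗ[k] W) : (⋀[k]^2 V) →ₗ[k] (⋀[k]^2 W) :=
  LinearMap.restrict (ExteriorAlgebra.map f).toLinearMap
    (fun _ hx => map_mem_exteriorPower f 2 hx)

end ExtSq

set_option maxHeartbeats 2000000 in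
theorem stmt_1 {k G V : Type} [Field k] [IsAlgClosed k] [CharZero k] [Group G]
    [AddCommGroup V] [Module k V] [FiniteDimensional k V]
    (σ : Representation k G V) (h2 : finrank k V = 2)
    -- σ is irreducible
    (hirr : (⊥ : Submodule k V) ≠ ⊤ ∧
      ∀ p : Submodule k V, (∀ g : G, ∀ v ∈ p, σ g v ∈ p) → p = ⊥ ∨ p = ⊤)
    (χ₁ χ₂ ν : G →* kˣ)
    -- ν occurs in ⋀²r, where r = σ ⊕ χ₁ ⊕ χ₂ acts on V × k × k
    (hocc : ∃ L : Submodule k (⋀[k]^2 (V × (k × k))), finrank k L = 1 ∧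
        ∀ g : G, ∀ x ∈ L,
          extSq (LinearMap.prodMap (σ g)
            (LinearMap.prodMap ((χ₁ g : k) • (LinearMap.id : k →ₗ[k] k))
              ((χ₂ g : k) • (LinearMap.id : k →ₗ[k] k)))) x = (ν g : k) • x)
    -- (det σ)·χ₁·χ₂ = ν²
    (hdet : ∀ g : G, LinearMap.det (σ g) * (χ₁ g : k) * (χ₂ g : k) = ((ν g : k)) ^ 2) :
    (∀ g : G, (χ₁ g : k) * (χ₂ g : k) = LinearMap.det (σ g)) ∧
    (∀ g : G, LinearMap.det (σ g) = (ν g : k)) := by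
  classical
  obtain ⟨L, hL1, hLinv⟩ := hocc
  set ρ : G → (V × (k × k)) →ₗ[k] (V × (k × k)) := fun g =>
    LinearMap.prodMap (σ g)
      (LinearMap.prodMap ((χ₁ g : k) • (LinearMap.id : k →ₗ[k] k))
        ((χ₂ g : k) • (LinearMap.id : k →ₗ[k] k))) with hρ
  have hρap : ∀ g (w : V × (k × k)),
      ρ g w = (σ g w.1, ((χ₁ g : k) * w.2.1, (χ₂ g : k) * w.2.2)) := by
    intro g w; simp [hρ, smul_eq_mul]
  -- a nonzero eigenvector
  have hLne : L ≠ ⊥ := by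
    intro h; rw [h, finrank_bot] at hL1; norm_num at hL1
  obtain ⟨x0, hx0L, hx0⟩ := Submodule.exists_mem_ne_zero_of_ne_bot hLne
  set x : ExteriorAlgebra k (V × (k × k)) := (x0 : ExteriorAlgebra k (V × (k × k))) with hxdef
  have hx2 : x ∈ ⋀[k]^2 (V × (k × k)) := x0.2
  have hxne : x ≠ 0 := by
    intro h; exact hx0 (by ext; exact h)
  have heig : ∀ g : G, ExteriorAlgebra.map (ρ g) x = (ν g : k) • x := by
    intro g
    have h1 := congrArg Subtype.val (hLinv g x0 hx0L)
    rw [extSq] at h1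
    exact h1
  -- bases
  obtain ⟨b⟩ : Nonempty (Basis (Fin 2) k V) := ⟨finBasisOfFinrankEq k V h2⟩
  set B : Basis (Fin 2 ⊕ Fin 2) k (V × (k × k)) := b.prod (Basis.finTwoProd k) with hB
  have hBinl : ∀ i : Fin 2, B (Sum.inl i) = (b i, 0) := by
    intro i
    exact Prod.ext (Basis.prod_apply_inl_fst _ _ _) (Basis.prod_apply_inl_snd _ _ _)
  have hBinr0 : B (Sum.inr 0) = (0, (1, 0)) := by
    refine Prod.ext (Basis.prod_apply_inr_fst _ _ _) ?_
    rw [Basis.prod_apply_inr_snd, Basis.finTwoProd_zero]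
  have hBinr1 : B (Sum.inr 1) = (0, (0, 1)) := by
    refine Prod.ext (Basis.prod_apply_inr_fst _ _ _) ?_
    rw [Basis.prod_apply_inr_snd, Basis.finTwoProd_one]
  -- determinant formulas
  have hdet2 : ∀ u : Fin 2 → k × k,
      (Basis.finTwoProd k).det u = (u 0).1 * (u 1).2 - (u 1).1 * (u 0).2 := by
    intro u
    rw [Basis.det_apply, Matrix.det_fin_two]
    simp [Basis.toMatrix_apply, Basis.coe_finTwoProd_repr]
  have hbdet : ∀ u : Fin 2 → V,
      b.det u = b.repr (u 0) 0 * b.repr (u 1) 1 - b.repr (u 1) 0 * b.repr (u 0) 1 := by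
    intro u
    rw [Basis.det_apply, Matrix.det_fin_two]
    simp [Basis.toMatrix_apply]
  -- the alternating forms
  set ωdet : (V × (k × k)) [⋀^Fin 2]→ₗ[k] k :=
    b.det.compLinearMap (LinearMap.fst k V (k × k)) with hωdet
  set ω34 : (V × (k × k)) [⋀^Fin 2]→ₗ[k] k :=
    (Basis.finTwoProd k).det.compLinearMap (LinearMap.snd k V (k × k)) with hω34
  set p3 : (V × (k × k)) →ₗ[k] k :=
    (LinearMap.fst k k k).comp (LinearMap.snd k V (k × k)) with hp3
  set p4 : (V × (k × k)) →ₗ[k] k :=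
    (LinearMap.snd k k k).comp (LinearMap.snd k V (k × k)) with hp4
  set ω13 : Fin 2 → (V × (k × k)) [⋀^Fin 2]→ₗ[k] k := fun i =>
    (Basis.finTwoProd k).det.compLinearMap
      (LinearMap.prod ((b.coord i).comp (LinearMap.fst k V (k × k))) p3) with hω13
  set ω14 : Fin 2 → (V × (k × k)) [⋀^Fin 2]→ₗ[k] k := fun i =>
    (Basis.finTwoProd k).det.compLinearMap
      (LinearMap.prod ((b.coord i).comp (LinearMap.fst k V (k × k))) p4) with hω14
  -- formulas
  have hω34ap : ∀ m : Fin 2 → V × (k × k),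
      ω34 m = (m 0).2.1 * (m 1).2.2 - (m 1).2.1 * (m 0).2.2 := by
    intro m; rw [hω34, AlternatingMap.compLinearMap_apply, hdet2]; simp
  have hωdetap : ∀ m : Fin 2 → V × (k × k),
      ωdet m = b.repr (m 0).1 0 * b.repr (m 1).1 1 - b.repr (m 1).1 0 * b.repr (m 0).1 1 := by
    intro m; rw [hωdet, AlternatingMap.compLinearMap_apply, hbdet]; simp
  have hω13ap : ∀ (i : Fin 2) (m : Fin 2 → V × (k × k)),
      ω13 i m = b.repr (m 0).1 i * (m 1).2.1 - b.repr (m 1).1 i * (m 0).2.1 := by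
    intro i m; rw [hω13, AlternatingMap.compLinearMap_apply, hdet2]; simp [hp3]
  have hω14ap : ∀ (i : Fin 2) (m : Fin 2 → V × (k × k)),
      ω14 i m = b.repr (m 0).1 i * (m 1).2.2 - b.repr (m 1).1 i * (m 0).2.2 := by
    intro i m; rw [hω14, AlternatingMap.compLinearMap_apply, hdet2]; simp [hp4]
  -- equivariance of the det functional
  have hEdet : ∀ g : G,
      LinearMap.det (σ g) * lift2' ωdet x = (ν g : k) * lift2' ωdet x := by
    intro g
    have hgen : ∀ m : Fin 2 → V × (k × k),
        lift2' ωdet (ExteriorAlgebra.ιMulti k 2 (ρ g ∘ m))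
          = (LinearMap.det (σ g) • (LinearMap.id : k →ₗ[k] k))
              (lift2' ωdet (ExteriorAlgebra.ιMulti k 2 m)) := by
      intro m
      rw [lift2'_ιMulti, lift2'_ιMulti]
      have hc : ωdet (ρ g ∘ m) = b.det (⇑(σ g) ∘ fun i => (m i).1) := by
        rw [hωdet, AlternatingMap.compLinearMap_apply]
        exact congrArg _ (funext fun i => by simp [hρap, Function.comp])
      rw [hc, Basis.det_comp]
      have hc2 : ωdet m = b.det fun i => (m i).1 := by
        rw [hωdet, AlternatingMap.compLinearMap_apply]
        exact congrArg _ (funext fun i => rfl)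
      simp only [LinearMap.smul_apply, LinearMap.id_coe, id_eq, smul_eq_mul, hc2]
    have h1 := lift2'_comm (lift2' ωdet) (LinearMap.det (σ g) • LinearMap.id) (ρ g) hgen hx2
    rw [heig g, map_smul] at h1
    simpa [smul_eq_mul] using h1.symm
  -- equivariance of the 34 functional
  have hE34 : ∀ g : G,
      ((χ₁ g : k) * (χ₂ g : k)) * lift2' ω34 x = (ν g : k) * lift2' ω34 x := by
    intro g
    have hgen : ∀ m : Fin 2 → V × (k × k),
        lift2' ω34 (ExteriorAlgebra.ιMulti k 2 (ρ g ∘ m))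
          = ((((χ₁ g : k) * (χ₂ g : k)) • (LinearMap.id : k →ₗ[k] k)))
              (lift2' ω34 (ExteriorAlgebra.ιMulti k 2 m)) := by
      intro m
      rw [lift2'_ιMulti, lift2'_ιMulti, hω34ap, hω34ap]
      simp only [Function.comp, hρap, LinearMap.smul_apply, LinearMap.id_coe, id_eq,
        smul_eq_mul]
      ring
    have h1 := lift2'_comm (lift2' ω34) (((χ₁ g : k) * (χ₂ g : k)) • LinearMap.id) (ρ g) hgen hx2
    rw [heig g, map_smul] at h1
    simpa [smul_eq_mul] using h1.symm
  -- the V-valued 13 functional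
  set F13 : ExteriorAlgebra k (V × (k × k)) →ₗ[k] V :=
    (lift2' (ω13 0)).smulRight (b 0) + (lift2' (ω13 1)).smulRight (b 1) with hF13
  set F14 : ExteriorAlgebra k (V × (k × k)) →ₗ[k] V :=
    (lift2' (ω14 0)).smulRight (b 0) + (lift2' (ω14 1)).smulRight (b 1) with hF14
  have hF13val : ∀ m : Fin 2 → V × (k × k),
      F13 (ExteriorAlgebra.ιMulti k 2 m) = (m 1).2.1 • (m 0).1 - (m 0).2.1 • (m 1).1 := by
    intro m
    have hs0 : b.repr (m 0).1 0 • b 0 + b.repr (m 0).1 1 • b 1 = (m 0).1 := by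
      have := b.sum_repr (m 0).1; rwa [Fin.sum_univ_two] at this
    have hs1 : b.repr (m 1).1 0 • b 0 + b.repr (m 1).1 1 • b 1 = (m 1).1 := by
      have := b.sum_repr (m 1).1; rwa [Fin.sum_univ_two] at this
    rw [hF13]
    simp only [LinearMap.add_apply, LinearMap.smulRight_apply, lift2'_ιMulti, hω13ap]
    linear_combination (norm := module) (m 1).2.1 • hs0 - (m 0).2.1 • hs1
  have hF14val : ∀ m : Fin 2 → V × (k × k),
      F14 (ExteriorAlgebra.ιMulti k 2 m) = (m 1).2.2 • (m 0).1 - (m 0).2.2 • (m 1).1 := by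
    intro m
    have hs0 : b.repr (m 0).1 0 • b 0 + b.repr (m 0).1 1 • b 1 = (m 0).1 := by
      have := b.sum_repr (m 0).1; rwa [Fin.sum_univ_two] at this
    have hs1 : b.repr (m 1).1 0 • b 0 + b.repr (m 1).1 1 • b 1 = (m 1).1 := by
      have := b.sum_repr (m 1).1; rwa [Fin.sum_univ_two] at this
    rw [hF14]
    simp only [LinearMap.add_apply, LinearMap.smulRight_apply, lift2'_ιMulti, hω14ap]
    linear_combination (norm := module) (m 1).2.2 • hs0 - (m 0).2.2 • hs1
  have hu13 : ∀ g : G, (χ₁ g : k) • σ g (F13 x) = (ν g : k) • F13 x := by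
    intro g
    have hgen : ∀ m : Fin 2 → V × (k × k),
        F13 (ExteriorAlgebra.ιMulti k 2 (ρ g ∘ m))
          = ((χ₁ g : k) • (σ g : V →ₗ[k] V)) (F13 (ExteriorAlgebra.ιMulti k 2 m)) := by
      intro m
      rw [hF13val, hF13val]
      simp only [Function.comp, hρap, LinearMap.smul_apply, map_sub, map_smul]
      module
    have h1 := lift2'_comm F13 ((χ₁ g : k) • (σ g : V →ₗ[k] V)) (ρ g) hgen hx2
    rw [heig g, map_smul] at h1
    simpa using h1.symm
  have hu14 : ∀ g : G, (χ₂ g : k) • σ g (F14 x) = (ν g : k) • F14 x := by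
    intro g
    have hgen : ∀ m : Fin 2 → V × (k × k),
        F14 (ExteriorAlgebra.ιMulti k 2 (ρ g ∘ m))
          = ((χ₂ g : k) • (σ g : V →ₗ[k] V)) (F14 (ExteriorAlgebra.ιMulti k 2 m)) := by
      intro m
      rw [hF14val, hF14val]
      simp only [Function.comp, hρap, LinearMap.smul_apply, map_sub, map_smul]
      module
    have h1 := lift2'_comm F14 ((χ₂ g : k) • (σ g : V →ₗ[k] V)) (ρ g) hgen hx2
    rw [heig g, map_smul] at h1
    simpa using h1.symm
  -- irreducibility kills eigenvectors in V
  have key : ∀ u : V, (∀ g : G, ∃ c : k, σ g u = c • u) → u = 0 := by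
    intro u hu
    by_contra h0
    have hinv : ∀ g : G, ∀ v ∈ Submodule.span k {u}, σ g v ∈ Submodule.span k {u} := by
      intro g v hv
      obtain ⟨a, rfl⟩ := Submodule.mem_span_singleton.mp hv
      obtain ⟨c, hc⟩ := hu g
      rw [map_smul, hc]
      exact Submodule.smul_mem _ _ (Submodule.smul_mem _ _ (Submodule.mem_span_singleton_self u))
    rcases hirr.2 _ hinv with h | h
    · have : u ∈ (⊥ : Submodule k V) := h ▸ Submodule.mem_span_singleton_self u
      exact h0 (by simpa using this)
    · have h1 : finrank k (Submodule.span k {u}) = 1 := finrank_span_singleton h0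
      rw [h, finrank_top, h2] at h1
      norm_num at h1
  have h13z : F13 x = 0 := by
    apply key
    intro g
    refine ⟨(χ₁ g : k)⁻¹ * (ν g : k), ?_⟩
    have h := hu13 g
    have hχ : (χ₁ g : k) ≠ 0 := Units.ne_zero _
    rw [mul_smul, ← h, inv_smul_smul₀ hχ]
  have h14z : F14 x = 0 := by
    apply key
    intro g
    refine ⟨(χ₂ g : k)⁻¹ * (ν g : k), ?_⟩
    have h := hu14 g
    have hχ : (χ₂ g : k) ≠ 0 := Units.ne_zero _
    rw [mul_smul, ← h, inv_smul_smul₀ hχ]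
  have hcoordzero : ∀ L0 L1 : k, L0 • b 0 + L1 • b 1 = 0 → L0 = 0 ∧ L1 = 0 := by
    intro L0 L1 h
    have h0 := congrArg (fun v => b.repr v 0) h
    have h1 := congrArg (fun v => b.repr v 1) h
    simp [Basis.repr_self, Finsupp.single_apply] at h0 h1
    exact ⟨h0, h1⟩
  have h13z' : lift2' (ω13 0) x = 0 ∧ lift2' (ω13 1) x = 0 := by
    apply hcoordzero
    rw [hF13] at h13z
    simpa [LinearMap.add_apply, LinearMap.smulRight_apply] using h13z
  have h14z' : lift2' (ω14 0) x = 0 ∧ lift2' (ω14 1) x = 0 := by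
    apply hcoordzero
    rw [hF14] at h14z
    simpa [LinearMap.add_apply, LinearMap.smulRight_apply] using h14z
  -- expand x in the basis of the exterior square
  obtain ⟨c, hcx⟩ := exists_coeffs B hx2
  have hlift : ∀ f : (V × (k × k)) [⋀^Fin 2]→ₗ[k] k,
      lift2' f x = ∑ i, ∑ j, c i j * f ![B i, B j] := by
    intro f
    have hdiag : ∀ u : V × (k × k), f ![u, u] = 0 := fun u =>
      f.map_eq_zero_of_eq ![u, u] (by simp) (by decide : (0 : Fin 2) ≠ 1)
    rw [hcx]
    simp [map_sum, map_smul, lift2'_mul, smul_eq_mul, hdiag]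
  have hrepr : ∀ i j : Fin 2, b.repr (b i) j = if i = j then 1 else 0 := by
    intro i j; rw [Basis.repr_self]; exact Finsupp.single_apply
  have hD : lift2' ωdet x = c (Sum.inl 0) (Sum.inl 1) - c (Sum.inl 1) (Sum.inl 0) := by
    rw [hlift]
    simp only [Fintype.sum_sum_type, Fin.sum_univ_two, hωdetap, Matrix.cons_val_zero,
      Matrix.cons_val_one, Matrix.head_cons, hBinl, hBinr0, hBinr1, hrepr, map_zero,
      Finsupp.coe_zero, Pi.zero_apply]
    norm_num
    try ring
  have hS : lift2' ω34 x = c (Sum.inr 0) (Sum.inr 1) - c (Sum.inr 1) (Sum.inr 0) := by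
    rw [hlift]
    simp only [Fintype.sum_sum_type, Fin.sum_univ_two, hω34ap, Matrix.cons_val_zero,
      Matrix.cons_val_one, Matrix.head_cons, hBinl, hBinr0, hBinr1]
    norm_num
    try ring
  have hU0 : lift2' (ω13 0) x = c (Sum.inl 0) (Sum.inr 0) - c (Sum.inr 0) (Sum.inl 0) := by
    rw [hlift]
    simp only [Fintype.sum_sum_type, Fin.sum_univ_two, hω13ap, Matrix.cons_val_zero,
      Matrix.cons_val_one, Matrix.head_cons, hBinl, hBinr0, hBinr1, hrepr, map_zero,
      Finsupp.coe_zero, Pi.zero_apply]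
    norm_num
    try ring
  have hU1 : lift2' (ω13 1) x = c (Sum.inl 1) (Sum.inr 0) - c (Sum.inr 0) (Sum.inl 1) := by
    rw [hlift]
    simp only [Fintype.sum_sum_type, Fin.sum_univ_two, hω13ap, Matrix.cons_val_zero,
      Matrix.cons_val_one, Matrix.head_cons, hBinl, hBinr0, hBinr1, hrepr, map_zero,
      Finsupp.coe_zero, Pi.zero_apply]
    norm_num
    try ring
  have hW0 : lift2' (ω14 0) x = c (Sum.inl 0) (Sum.inr 1) - c (Sum.inr 1) (Sum.inl 0) := by
    rw [hlift]
    simp only [Fintype.sum_sum_type, Fin.sum_univ_two, hω14ap, Matrix.cons_val_zero,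
      Matrix.cons_val_one, Matrix.head_cons, hBinl, hBinr0, hBinr1, hrepr, map_zero,
      Finsupp.coe_zero, Pi.zero_apply]
    norm_num
    try ring
  have hW1 : lift2' (ω14 1) x = c (Sum.inl 1) (Sum.inr 1) - c (Sum.inr 1) (Sum.inl 1) := by
    rw [hlift]
    simp only [Fintype.sum_sum_type, Fin.sum_univ_two, hω14ap, Matrix.cons_val_zero,
      Matrix.cons_val_one, Matrix.head_cons, hBinl, hBinr0, hBinr1, hrepr, map_zero,
      Finsupp.coe_zero, Pi.zero_apply]
    norm_num
    try ring
  -- at least one of the two remaining coefficients is nonzero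
  have hsw : ∀ u w : V × (k × k), ExteriorAlgebra.ι k w * ExteriorAlgebra.ι k u
      = -(ExteriorAlgebra.ι k u * ExteriorAlgebra.ι k w) := by
    intro u w
    exact eq_neg_of_add_eq_zero_left (ExteriorAlgebra.ι_add_mul_swap w u)
  have hDS : lift2' ωdet x ≠ 0 ∨ lift2' ω34 x ≠ 0 := by
    by_contra hcon
    push_neg at hcon
    apply hxne
    have e01 : c (Sum.inl 0) (Sum.inl 1) = c (Sum.inl 1) (Sum.inl 0) := by
      have h := hcon.1; rw [hD] at h; exact sub_eq_zero.mp h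
    have e23 : c (Sum.inr 0) (Sum.inr 1) = c (Sum.inr 1) (Sum.inr 0) := by
      have h := hcon.2; rw [hS] at h; exact sub_eq_zero.mp h
    have e13a : c (Sum.inl 0) (Sum.inr 0) = c (Sum.inr 0) (Sum.inl 0) := by
      have h := h13z'.1; rw [hU0] at h; exact sub_eq_zero.mp h
    have e13b : c (Sum.inl 1) (Sum.inr 0) = c (Sum.inr 0) (Sum.inl 1) := by
      have h := h13z'.2; rw [hU1] at h; exact sub_eq_zero.mp h
    have e14a : c (Sum.inl 0) (Sum.inr 1) = c (Sum.inr 1) (Sum.inl 0) := by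
      have h := h14z'.1; rw [hW0] at h; exact sub_eq_zero.mp h
    have e14b : c (Sum.inl 1) (Sum.inr 1) = c (Sum.inr 1) (Sum.inl 1) := by
      have h := h14z'.2; rw [hW1] at h; exact sub_eq_zero.mp h
    rw [hcx]
    simp only [Fintype.sum_sum_type, Fin.sum_univ_two]
    rw [e01, e23, e13a, e13b, e14a, e14b,
      hsw (B (Sum.inl 0)) (B (Sum.inl 1)),
      hsw (B (Sum.inl 0)) (B (Sum.inr 0)),
      hsw (B (Sum.inl 0)) (B (Sum.inr 1)),
      hsw (B (Sum.inl 1)) (B (Sum.inr 0)),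
      hsw (B (Sum.inl 1)) (B (Sum.inr 1)),
      hsw (B (Sum.inr 0)) (B (Sum.inr 1))]
    simp only [ExteriorAlgebra.ι_sq_zero, smul_zero, smul_neg]
    abel
  -- conclude
  rcases hDS with hne | hne
  · have hdσ : ∀ g : G, LinearMap.det (σ g) = (ν g : k) := by
      intro g
      exact mul_right_cancel₀ hne (hEdet g)
    refine ⟨fun g => ?_, hdσ⟩
    have h := hdet g
    rw [hdσ g] at h
    have hν : (ν g : k) ≠ 0 := Units.ne_zero _
    have hχ : (χ₁ g : k) * (χ₂ g : k) = (ν g : k) := by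
      apply mul_left_cancel₀ hν
      rw [← mul_assoc, h, sq]
    rw [hχ, hdσ g]
  · have hχ : ∀ g : G, (χ₁ g : k) * (χ₂ g : k) = (ν g : k) := by
      intro g
      exact mul_right_cancel₀ hne (hE34 g)
    have hdσ : ∀ g : G, LinearMap.det (σ g) = (ν g : k) := by
      intro g
      have h := hdet g
      rw [mul_assoc, hχ g, sq] at h
      have hν : (ν g : k) ≠ 0 := Units.ne_zero _
      exact mul_right_cancel₀ hν h
    exact ⟨fun g => (hχ g).trans (hdσ g).symm, hdσ⟩
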